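/- Let d ≥ 2 and suppose [n] is the disjoint union of sets X_1,…,X_e. Let D = {(A_i^{(1)},…,A_i^{(d)})}_{1≤i≤m} be any family of d-partitions of [n]. Let S = ⋃_{i=1}^m ⋃_{r=1}^d A_i^{(r)}, S_k = S ∩ X_k and s_k = |S_k| for k ∈ [e]. Let G(S) be the set of all permutations σ of S such that σ(S_k) = S_k for each k ∈ [e], and for σ ∈ G(S) let I_σ = { i ∈ [m] : σ(A_i^{(1)} ∩ X_k) < σ(A_i^{(2)} ∩ X_k) < ⋯ < σ(A_i^{(d)} ∩ X_k) for every k ∈ [e] }. Then ∑_{i=1}^m ∏_{k=1}^e ( s_k! · binom(∑_{r=1}^d |A_i^{(r)} ∩ X_k|; |A_i^{(1)} ∩ X_k|,…,|A_i^{(d)} ∩ X_k|)^{-1} ) = ∑_{σ∈G(S)} |I_σ|. -/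

import Mathlib

open scoped Classical
open Finset

noncomputable section

private lemma card_filter_coe {S : Finset ℕ} (V : Finset ℕ) (hV : V ⊆ S) :
    (Finset.univ.filter (fun x : {x : ℕ // x ∈ S} => (x : ℕ) ∈ V)).card = V.card := by
  refine Finset.card_nbij (fun x => (x : ℕ)) ?_ ?_ ?_
  · intro x hx
    simpa using (Finset.mem_filter.mp hx).2
  · intro x _ y _ h
    exact Subtype.ext h
  · intro v hv
    rw [Finset.mem_coe] at hv
    exact ⟨⟨v, hV hv⟩, by simp [hv], rfl⟩
  -- fix

private lemma card_perm_colors {α β : Type*} [Fintype α] [DecidableEq α] [Fintype β]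
    [DecidableEq β] (f f' : α → β)
    (h : ∀ b, (Finset.univ.filter fun a => f a = b).card
        = (Finset.univ.filter fun a => f' a = b).card) :
    (Finset.univ.filter fun σ : Equiv.Perm α => ∀ x, f' (σ x) = f x).card
      = ∏ b, Nat.factorial (Finset.univ.filter fun a => f a = b).card := by
  have hfib : ∀ b, { a // f a = b } ≃ { a // f' a = b } := fun b => by
    apply Fintype.equivOfCardEq
    rw [Fintype.card_subtype, Fintype.card_subtype]
    exact h b
  set π : α ≃ α := Equiv.ofFiberEquiv hfib with hπdef
  have hπ : ∀ x, f' (π x) = f x := fun x => Equiv.ofFiberEquiv_map hfib x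
  have key : (Finset.univ.filter fun σ : Equiv.Perm α => ∀ x, f' (σ x) = f x).card
      = (Finset.univ.filter fun σ : Equiv.Perm α => ∀ x, f (σ x) = f x).card := by
    apply Finset.card_nbij' (fun σ => σ.trans π.symm) (fun σ => σ.trans π)
    · intro σ hσ
      simp only [Finset.mem_coe, Finset.mem_filter, Finset.mem_univ, true_and] at hσ ⊢
      intro x
      have := hπ (π.symm (σ x))
      rw [Equiv.apply_symm_apply] at this
      simpa [← this] using hσ x
    · intro σ hσ
      simp only [Finset.mem_coe, Finset.mem_filter, Finset.mem_univ, true_and] at hσ ⊢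
      intro x
      simpa [hπ (σ x)] using hσ x
    · intro σ _; ext x; simp
    · intro σ _; ext x; simp
  rw [key]
  have : (Finset.univ.filter fun σ : Equiv.Perm α => ∀ x, f (σ x) = f x).card
      = Fintype.card {g : Equiv.Perm α // f ∘ g = f} := by
    rw [Fintype.card_subtype]
    congr 1
    apply Finset.filter_congr
    intro σ _
    rw [funext_iff]
    exact Iff.rfl
  rw [this, DomMulAct.stabilizer_card f]
  exact Finset.prod_congr rfl fun b _ => by rw [Fintype.card_subtype]


variable {α : Type*} [LinearOrder α]




/-- rank of `x` inside `T`. -/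
private def rk (T : Finset α) (x : α) : ℕ := (T.filter fun y => y < x).card

private lemma rk_lt_rk {T : Finset α} {x y : α} (hx : x ∈ T) (hxy : x < y) :
    rk T x < rk T y := by
  apply Finset.card_lt_card
  constructor
  · intro z hz
    rw [Finset.mem_filter] at hz ⊢
    exact ⟨hz.1, lt_trans hz.2 hxy⟩
  · intro hsub
    have : x ∈ T.filter fun y => y < x := hsub (Finset.mem_filter.mpr ⟨hx, hxy⟩)
    exact absurd (Finset.mem_filter.mp this).2 (lt_irrefl x)

private lemma lt_of_rk_lt {T : Finset α} {x y : α} (hy : y ∈ T)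
    (h : rk T x < rk T y) : x < y := by
  by_contra hc
  push_neg at hc
  rcases eq_or_lt_of_le hc with rfl | hlt
  · exact lt_irrefl _ h
  · exact absurd h (not_lt.mpr (le_of_lt (rk_lt_rk hy hlt)))

private lemma rk_lt_card {T : Finset α} {x : α} (hx : x ∈ T) : rk T x < T.card := by
  apply Finset.card_lt_card
  constructor
  · exact Finset.filter_subset _ _
  · intro hsub
    exact absurd (Finset.mem_filter.mp (hsub hx)).2 (lt_irrefl x)

private lemma rk_image (T : Finset α) : T.image (rk T) = Finset.range T.card := by
  apply Finset.eq_of_subset_of_card_le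
  · intro j hj
    obtain ⟨x, hx, rfl⟩ := Finset.mem_image.mp hj
    exact Finset.mem_range.mpr (rk_lt_card hx)
  · rw [Finset.card_range, Finset.card_image_of_injOn]
    intro x hx y hy hxy
    rcases lt_trichotomy x y with h | h | h
    · exact absurd (hxy ▸ rk_lt_rk hx h) (lt_irrefl _)
    · exact h
    · exact absurd (hxy ▸ rk_lt_rk hy h) (lt_irrefl _)

private lemma card_rk_band {T : Finset α} {l u : ℕ} (hlu : l ≤ u) (hu : u ≤ T.card) :
    (T.filter fun x => l ≤ rk T x ∧ rk T x < u).card = u - l := by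
  have : (T.filter fun x => l ≤ rk T x ∧ rk T x < u).card = (Finset.Ico l u).card := by
    refine Finset.card_nbij (rk T) ?_ ?_ ?_
    · intro x hx
      have := (Finset.mem_filter.mp hx).2
      exact Finset.mem_Ico.mpr this
    · intro x hx y hy hxy
      simp only [Finset.mem_coe, Finset.mem_filter] at hx hy
      rcases lt_trichotomy x y with h | h | h
      · exact absurd (hxy ▸ rk_lt_rk hx.1 h) (lt_irrefl _)
      · exact h
      · exact absurd (hxy ▸ rk_lt_rk hy.1 h) (lt_irrefl _)
    · intro j hj
      rw [Finset.mem_coe, Finset.mem_Ico] at hj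
      have hjr : j ∈ Finset.range T.card := Finset.mem_range.mpr (lt_of_lt_of_le hj.2 hu)
      rw [← rk_image T] at hjr
      obtain ⟨x, hx, rfl⟩ := Finset.mem_image.mp hjr
      exact ⟨x, Finset.mem_coe.mpr (Finset.mem_filter.mpr ⟨hx, hj⟩), rfl⟩
  rw [this, Nat.card_Ico]

/-- partial sums of a `Fin d`-indexed family -/
private def psum {d : ℕ} (a : Fin d → ℕ) (t : ℕ) : ℕ :=
  ∑ q ∈ Finset.univ.filter (fun q : Fin d => (q : ℕ) < t), a q

private lemma psum_zero {d : ℕ} (a : Fin d → ℕ) : psum a 0 = 0 := by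
  simp [psum]

private lemma psum_mono {d : ℕ} (a : Fin d → ℕ) {t t' : ℕ} (h : t ≤ t') :
    psum a t ≤ psum a t' := by
  apply Finset.sum_le_sum_of_subset
  intro q hq
  rw [Finset.mem_filter] at hq ⊢
  exact ⟨hq.1, lt_of_lt_of_le hq.2 h⟩

private lemma psum_all {d : ℕ} (a : Fin d → ℕ) {t : ℕ} (h : d ≤ t) :
    psum a t = ∑ q, a q := by
  unfold psum
  congr 1
  apply Finset.filter_true_of_mem
  intro q _
  exact lt_of_lt_of_le q.2 h

private lemma psum_succ {d : ℕ} (a : Fin d → ℕ) (r : Fin d) :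
    psum a ((r : ℕ) + 1) = psum a r + a r := by
  unfold psum
  have : (Finset.univ.filter fun q : Fin d => (q : ℕ) < (r : ℕ) + 1)
      = insert r (Finset.univ.filter fun q : Fin d => (q : ℕ) < (r : ℕ)) := by
    ext q
    simp only [Finset.mem_filter, Finset.mem_univ, true_and, Finset.mem_insert]
    rw [Nat.lt_succ_iff_lt_or_eq]
    constructor
    · rintro (h | h)
      · exact Or.inr h
      · exact Or.inl (Fin.ext h)
    · rintro (rfl | h)
      · exact Or.inr rfl
      · exact Or.inl h
  rw [this, Finset.sum_insert (by simp)]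
  ring

private lemma psum_add_le {d : ℕ} (a : Fin d → ℕ) {r r' : Fin d} (h : r < r') :
    psum a r + a r ≤ psum a r' := by
  rw [← psum_succ]
  exact psum_mono a h

private lemma psum_add_le_sum {d : ℕ} (a : Fin d → ℕ) (r : Fin d) :
    psum a r + a r ≤ ∑ q, a q := by
  rw [← psum_succ, ← psum_all a (le_refl d)]
  exact psum_mono a r.2

private lemma psum_exists {d : ℕ} (a : Fin d → ℕ) {j : ℕ} (hj : j < ∑ q, a q) :
    ∃ r : Fin d, psum a r ≤ j ∧ j < psum a r + a r := by
  have hd : 0 < d := by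
    rcases Nat.eq_zero_or_pos d with rfl | h
    · simp at hj
    · exact h
  set s := Finset.univ.filter (fun r : Fin d => psum a r ≤ j) with hs
  have hne : s.Nonempty := ⟨⟨0, hd⟩, by simp [hs, psum_zero]⟩
  set r := s.max' hne with hr
  have hrs : psum a r ≤ j := (Finset.mem_filter.mp (s.max'_mem hne)).2
  refine ⟨r, hrs, ?_⟩
  by_contra h'
  push_neg at h'
  rcases lt_or_ge ((r : ℕ) + 1) d with hlt | hge
  · have hmem : (⟨(r : ℕ) + 1, hlt⟩ : Fin d) ∈ s := by
      rw [hs, Finset.mem_filter]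
      refine ⟨Finset.mem_univ _, ?_⟩
      show psum a ((r : ℕ) + 1) ≤ j
      rw [psum_succ]
      exact h'
    have := s.le_max' _ hmem
    rw [← hr] at this
    have : (r : ℕ) + 1 ≤ (r : ℕ) := this
    omega
  · have : ∑ q, a q ≤ j := by
      rw [← psum_all a hge, psum_succ]
      exact h'
    omega



/-- the canonical ordered `d`-chunking of `T` with sizes `a`. -/
private def chunk {d : ℕ} (T : Finset α) (a : Fin d → ℕ) (r : Fin d) : Finset α :=
  T.filter fun x => psum a r ≤ rk T x ∧ rk T x < psum a r + a r

private lemma chunk_subset {d : ℕ} (T : Finset α) (a : Fin d → ℕ) (r : Fin d) :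
    chunk T a r ⊆ T := Finset.filter_subset _ _

private lemma chunk_card {d : ℕ} {T : Finset α} {a : Fin d → ℕ}
    (hsum : ∑ q, a q = T.card) (r : Fin d) : (chunk T a r).card = a r := by
  unfold chunk
  rw [card_rk_band (Nat.le_add_right _ _) (by rw [← hsum]; exact psum_add_le_sum a r)]
  omega

private lemma chunk_lt {d : ℕ} {T : Finset α} {a : Fin d → ℕ} {r r' : Fin d}
    (h : r < r') {x y : α} (hx : x ∈ chunk T a r) (hy : y ∈ chunk T a r') : x < y := by
  rw [chunk, Finset.mem_filter] at hx hy
  apply lt_of_rk_lt hy.1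
  calc rk T x < psum a r + a r := hx.2.2
    _ ≤ psum a r' := psum_add_le a h
    _ ≤ rk T y := hy.2.1

private lemma chunk_disjoint {d : ℕ} {T : Finset α} {a : Fin d → ℕ} {r r' : Fin d}
    (h : r ≠ r') : Disjoint (chunk T a r) (chunk T a r') := by
  rw [Finset.disjoint_left]
  intro x hx hx'
  rcases lt_trichotomy r r' with hlt | rfl | hlt
  · exact absurd (chunk_lt hlt hx hx') (lt_irrefl x)
  · exact h rfl
  · exact absurd (chunk_lt hlt hx' hx) (lt_irrefl x)

private lemma chunk_biUnion {d : ℕ} {T : Finset α} {a : Fin d → ℕ}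
    (hsum : ∑ q, a q = T.card) :
    Finset.univ.biUnion (chunk T a) = T := by
  apply Finset.Subset.antisymm
  · intro x hx
    obtain ⟨r, _, hr⟩ := Finset.mem_biUnion.mp hx
    exact chunk_subset T a r hr
  · intro x hx
    have := rk_lt_card hx
    rw [← hsum] at this
    obtain ⟨r, h1, h2⟩ := psum_exists a this
    exact Finset.mem_biUnion.mpr ⟨r, Finset.mem_univ r,
      Finset.mem_filter.mpr ⟨hx, h1, h2⟩⟩

private lemma chunk_unique {d : ℕ} {T : Finset α} {a : Fin d → ℕ}
    (hsum : ∑ q, a q = T.card) (U : Fin d → Finset α)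
    (hcard : ∀ r, (U r).card = a r)
    (hord : ∀ r r' : Fin d, r < r' → ∀ x ∈ U r, ∀ y ∈ U r', x < y)
    (hun : Finset.univ.biUnion U = T) (r : Fin d) : U r = chunk T a r := by
  have hdisj : ∀ p q : Fin d, p ≠ q → Disjoint (U p) (U q) := by
    intro p q hpq
    rw [Finset.disjoint_left]
    intro x hx hx'
    rcases lt_trichotomy p q with hlt | rfl | hlt
    · exact absurd (hord p q hlt x hx x hx') (lt_irrefl x)
    · exact hpq rfl
    · exact absurd (hord q p hlt x hx' x hx) (lt_irrefl x)
  apply Finset.eq_of_subset_of_card_le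
  · intro x hx
    have hxT : x ∈ T := by
      rw [← hun]; exact Finset.mem_biUnion.mpr ⟨r, Finset.mem_univ r, hx⟩
    have hsplit : rk T x = ∑ q, ((U q).filter fun y => y < x).card := by
      unfold rk
      rw [← hun, Finset.filter_biUnion]
      rw [Finset.card_biUnion]
      intro p _ q _ hpq
      exact Finset.disjoint_filter_filter (hdisj p q hpq)
    have hlow : psum a r ≤ rk T x := by
      rw [hsplit]
      unfold psum
      have step : ∀ q ∈ Finset.univ.filter (fun q : Fin d => (q : ℕ) < (r : ℕ)),
          a q = ((U q).filter fun y => y < x).card := by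
        intro q hq
        have hqr : q < r := (Finset.mem_filter.mp hq).2
        rw [Finset.filter_true_of_mem fun y hy => hord q r hqr y hy x hx, hcard]
      rw [Finset.sum_congr rfl step]
      apply Finset.sum_le_sum_of_subset (Finset.filter_subset _ _)
    have hhigh : rk T x < psum a r + a r := by
      rw [hsplit, ← Finset.sum_filter_add_sum_filter_not Finset.univ
        (fun q : Fin d => (q : ℕ) < (r : ℕ))]
      have e1 : ∑ q ∈ Finset.univ.filter (fun q : Fin d => (q : ℕ) < (r : ℕ)),
          ((U q).filter fun y => y < x).card = psum a r := by
        unfold psum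
        apply Finset.sum_congr rfl
        intro q hq
        have hqr : q < r := (Finset.mem_filter.mp hq).2
        rw [Finset.filter_true_of_mem fun y hy => hord q r hqr y hy x hx, hcard]
      have e2 : ∑ q ∈ Finset.univ.filter (fun q : Fin d => ¬ (q : ℕ) < (r : ℕ)),
          ((U q).filter fun y => y < x).card
          = ((U r).filter fun y => y < x).card := by
        apply Finset.sum_eq_single_of_mem
        · simp
        · intro q hq hqr
          have : r < q := by
            have := (Finset.mem_filter.mp hq).2
            rcases lt_trichotomy r q with h | h | h
            · exact h
            · exact absurd h.symm hqr
            · exact absurd h this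
          rw [Finset.filter_false_of_mem, Finset.card_empty]
          intro y hy
          exact not_lt.mpr (le_of_lt (hord r q this x hx y hy))
      have e3 : ((U r).filter fun y => y < x).card < a r := by
        have hsub : (U r).filter (fun y => y < x) ⊆ (U r).erase x := by
          intro y hy
          rw [Finset.mem_filter] at hy
          exact Finset.mem_erase.mpr ⟨ne_of_lt hy.2, hy.1⟩
        calc ((U r).filter fun y => y < x).card ≤ ((U r).erase x).card :=
              Finset.card_le_card hsub
          _ < (U r).card := Finset.card_erase_lt_of_mem hx
          _ = a r := hcard r
      rw [e1, e2]
      omega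
    exact Finset.mem_filter.mpr ⟨hxT, hlow, hhigh⟩
  · rw [chunk_card hsum, hcard]


/-- which of the pairwise disjoint sets `V r` contains `x`, if any. -/
private def pick {α : Type*} {d : ℕ} (V : Fin d → Finset α) (x : α) : Option (Fin d) :=
  if h : ∃ r, x ∈ V r then some h.choose else none

private lemma pick_eq_some {α : Type*} {d : ℕ} {V : Fin d → Finset α}
    (hdisj : ∀ p q : Fin d, p ≠ q → Disjoint (V p) (V q)) {x : α} {r : Fin d} :
    pick V x = some r ↔ x ∈ V r := by
  constructor
  · intro h
    unfold pick at h
    split_ifs at h with h'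
    have := h'.choose_spec
    rw [Option.some_inj] at h
    exact h ▸ this
  · intro hx
    have h' : ∃ r, x ∈ V r := ⟨r, hx⟩
    have hspec := h'.choose_spec
    have : h'.choose = r := by
      by_contra hne
      exact Finset.disjoint_left.mp (hdisj _ _ hne) hspec hx
    unfold pick
    rw [dif_pos h', this]

private lemma pick_eq_none {α : Type*} {d : ℕ} {V : Fin d → Finset α} {x : α} :
    pick V x = none ↔ ∀ r, x ∉ V r := by
  unfold pick
  split_ifs with h'
  · simp only [reduceCtorEq, false_iff]
    push_neg
    exact h'
  · push_neg at h'
    simpa using h'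

private theorem grand_count {α : Type*} [Fintype α] [LinearOrder α] {e d : ℕ}
    (c : α → Fin e) (B : Fin e → Fin d → Finset α)
    (hB : ∀ k r, ∀ x ∈ B k r, c x = k)
    (hdisj : ∀ k, ∀ p q : Fin d, p ≠ q → Disjoint (B k p) (B k q)) :
    (Finset.univ.filter fun σ : Equiv.Perm α =>
        (∀ x, c (σ x) = c x) ∧
        ∀ (k : Fin e) (r₁ r₂ : Fin d), r₁ < r₂ →
          ∀ x ∈ B k r₁, ∀ y ∈ B k r₂, σ x < σ y).card
      * ∏ k, Nat.multinomial Finset.univ (fun r => (B k r).card)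
    = ∏ k, Nat.factorial (Finset.univ.filter fun x => c x = k).card := by
  set fib : Fin e → Finset α := fun k => Finset.univ.filter fun x => c x = k with hfib
  set a : Fin e → Fin d → ℕ := fun k r => (B k r).card with ha
  set asum : Fin e → ℕ := fun k => ∑ r, a k r with hasum
  set UB : Fin e → Finset α := fun k => Finset.univ.biUnion (B k) with hUB
  have hUBsub : ∀ k, UB k ⊆ fib k := by
    intro k x hx
    obtain ⟨r, _, hr⟩ := Finset.mem_biUnion.mp hx
    exact Finset.mem_filter.mpr ⟨Finset.mem_univ x, hB k r x hr⟩
  have hUBcard : ∀ k, (UB k).card = asum k := by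
    intro k
    exact Finset.card_biUnion fun p _ q _ h => hdisj k p q h
  have hasle : ∀ k, asum k ≤ (fib k).card := by
    intro k
    rw [← hUBcard k]
    exact Finset.card_le_card (hUBsub k)
  set U : Finset (Fin e → Finset α) :=
    Fintype.piFinset fun k => (fib k).powersetCard (asum k) with hU
  set F : Equiv.Perm α → (Fin e → Finset α) := fun σ k => (UB k).image σ with hF
  set Pset := Finset.univ.filter (fun σ : Equiv.Perm α =>
        (∀ x, c (σ x) = c x) ∧
        ∀ (k : Fin e) (r₁ r₂ : Fin d), r₁ < r₂ →
          ∀ x ∈ B k r₁, ∀ y ∈ B k r₂, σ x < σ y) with hPset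
  have hFmem : ∀ σ ∈ Pset, F σ ∈ U := by
    intro σ hσ
    rw [hPset, Finset.mem_filter] at hσ
    obtain ⟨_, hcp, _⟩ := hσ
    rw [hU, Fintype.mem_piFinset]
    intro k
    rw [Finset.mem_powersetCard]
    constructor
    · intro y hy
      obtain ⟨x, hx, rfl⟩ := Finset.mem_image.mp hy
      obtain ⟨r, _, hr⟩ := Finset.mem_biUnion.mp hx
      exact Finset.mem_filter.mpr ⟨Finset.mem_univ _, (hcp x).trans (hB k r x hr)⟩
    · rw [Finset.card_image_of_injective _ σ.injective]
      exact hUBcard k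
  have hN : Pset.card = ∑ u ∈ U, (Pset.filter fun σ => F σ = u).card :=
    Finset.card_eq_sum_card_fiberwise hFmem
  have hfiber : ∀ u ∈ U, (Pset.filter fun σ => F σ = u).card
      = ∏ k, (Nat.factorial ((fib k).card - asum k) * ∏ r, Nat.factorial (a k r)) := by
    intro u hu
    rw [hU, Fintype.mem_piFinset] at hu
    have huk : ∀ k, u k ⊆ fib k ∧ (u k).card = asum k := by
      intro k
      have := hu k
      rw [Finset.mem_powersetCard] at this
      exact this
    have hsumk : ∀ k, ∑ r, a k r = (u k).card := fun k => ((huk k).2).symm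
    set ch : Fin e → Fin d → Finset α := fun k => chunk (u k) (a k) with hch
    have hchsub : ∀ k r, ch k r ⊆ fib k :=
      fun k r => (chunk_subset (u k) (a k) r).trans (huk k).1
    have hchcard : ∀ k r, (ch k r).card = a k r := fun k r => chunk_card (hsumk k) r
    have hchdisj : ∀ k, ∀ p q : Fin d, p ≠ q → Disjoint (ch k p) (ch k q) :=
      fun k p q h => chunk_disjoint h
    have hchbiUnion : ∀ k, Finset.univ.biUnion (ch k) = u k :=
      fun k => chunk_biUnion (hsumk k)
    set f : α → Fin e × Option (Fin d) := fun x => (c x, pick (B (c x)) x) with hf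
    set f' : α → Fin e × Option (Fin d) := fun x => (c x, pick (ch (c x)) x) with hf'
    -- fibers of f
    have hffib_some : ∀ k r, (Finset.univ.filter fun x => f x = (k, some r)) = B k r := by
      intro k r
      ext x
      simp only [Finset.mem_filter, Finset.mem_univ, true_and, hf, Prod.mk.injEq]
      constructor
      · rintro ⟨rfl, h2⟩
        exact (pick_eq_some (hdisj (c x))).mp h2
      · intro hx
        have hc := hB k r x hx
        exact ⟨hc, (pick_eq_some (hdisj (c x))).mpr (hc ▸ hx)⟩
    have hffib_none : ∀ k, (Finset.univ.filter fun x => f x = (k, none)) = fib k \ UB k := by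
      intro k
      ext x
      simp only [Finset.mem_filter, Finset.mem_univ, true_and, hf, Prod.mk.injEq,
        Finset.mem_sdiff]
      constructor
      · rintro ⟨rfl, h2⟩
        have := pick_eq_none.mp h2
        refine ⟨Finset.mem_filter.mpr ⟨Finset.mem_univ _, rfl⟩, ?_⟩
        intro hmem
        obtain ⟨r, _, hr⟩ := Finset.mem_biUnion.mp hmem
        exact this r hr
      · rintro ⟨h1, h2⟩
        have hcx : c x = k := (Finset.mem_filter.mp h1).2
        refine ⟨hcx, pick_eq_none.mpr ?_⟩
        intro r hr
        exact h2 (Finset.mem_biUnion.mpr ⟨r, Finset.mem_univ r, hcx ▸ hr⟩)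
    -- fibers of f'
    have hffib'_some : ∀ k r, (Finset.univ.filter fun x => f' x = (k, some r)) = ch k r := by
      intro k r
      ext x
      simp only [Finset.mem_filter, Finset.mem_univ, true_and, hf', Prod.mk.injEq]
      constructor
      · rintro ⟨rfl, h2⟩
        exact (pick_eq_some (hchdisj (c x))).mp h2
      · intro hx
        have hc : c x = k := (Finset.mem_filter.mp (hchsub k r hx)).2
        exact ⟨hc, (pick_eq_some (hchdisj (c x))).mpr (hc ▸ hx)⟩
    have hffib'_none : ∀ k, (Finset.univ.filter fun x => f' x = (k, none)) = fib k \ u k := by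
      intro k
      ext x
      simp only [Finset.mem_filter, Finset.mem_univ, true_and, hf', Prod.mk.injEq,
        Finset.mem_sdiff]
      constructor
      · rintro ⟨rfl, h2⟩
        have := pick_eq_none.mp h2
        refine ⟨Finset.mem_filter.mpr ⟨Finset.mem_univ _, rfl⟩, ?_⟩
        intro hmem
        rw [← hchbiUnion (c x)] at hmem
        obtain ⟨r, _, hr⟩ := Finset.mem_biUnion.mp hmem
        exact this r hr
      · rintro ⟨h1, h2⟩
        have hcx : c x = k := (Finset.mem_filter.mp h1).2
        refine ⟨hcx, pick_eq_none.mpr ?_⟩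
        intro r hr
        exact h2 (chunk_subset (u k) (a k) r (hcx ▸ hr))
    -- fiber cardinalities agree
    have hcounts : ∀ b : Fin e × Option (Fin d),
        (Finset.univ.filter fun x => f x = b).card
          = (Finset.univ.filter fun x => f' x = b).card := by
      rintro ⟨k, _ | r⟩
      · rw [hffib_none k, hffib'_none k, Finset.card_sdiff_of_subset (hUBsub k),
          Finset.card_sdiff_of_subset (huk k).1, hUBcard k, (huk k).2]
      · rw [hffib_some k r, hffib'_some k r, hchcard k r]
    -- the fiber over u is exactly the permutations matching the colorings
    have hset : Pset.filter (fun σ => F σ = u)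
        = Finset.univ.filter (fun σ : Equiv.Perm α => ∀ x, f' (σ x) = f x) := by
      ext σ
      simp only [Finset.mem_filter, Finset.mem_univ, true_and, hPset]
      constructor
      · rintro ⟨⟨hcp, hord⟩, himg⟩
        have himgk : ∀ k, (UB k).image σ = u k := fun k => congrFun himg k
        have hkey : ∀ k r, (B k r).image σ = ch k r := by
          intro k
          apply chunk_unique (hsumk k)
          · intro r
            rw [Finset.card_image_of_injective _ σ.injective]
          · rintro r r' hrr' y hy z hz
            obtain ⟨x1, hx1, rfl⟩ := Finset.mem_image.mp hy
            obtain ⟨x2, hx2, rfl⟩ := Finset.mem_image.mp hz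
            exact hord k r r' hrr' x1 hx1 x2 hx2
          · rw [← Finset.biUnion_image]
            exact himgk k
        intro x
        rw [hf, hf', Prod.mk.injEq]
        refine ⟨hcp x, ?_⟩
        rw [hcp x]
        by_cases hex : ∃ r, x ∈ B (c x) r
        · obtain ⟨r, hr⟩ := hex
          rw [(pick_eq_some (hdisj (c x))).mpr hr]
          rw [pick_eq_some (hchdisj (c x))]
          rw [← hkey (c x) r]
          exact Finset.mem_image_of_mem σ hr
        · push_neg at hex
          rw [pick_eq_none.mpr hex]
          rw [pick_eq_none]
          intro r hmem
          rw [← hkey (c x) r] at hmem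
          obtain ⟨x', hx', heq⟩ := Finset.mem_image.mp hmem
          exact hex r (σ.injective heq ▸ hx')
      · intro hcol
        have hcp : ∀ x, c (σ x) = c x := fun x => congrArg Prod.fst (hcol x)
        have hmem : ∀ k r, ∀ x ∈ B k r, σ x ∈ ch k r := by
          intro k r x hx
          have hcx : c x = k := hB k r x hx
          have h1 : pick (B (c x)) x = some r :=
            (pick_eq_some (hdisj (c x))).mpr (hcx ▸ hx)
          have h2 := hcol x
          rw [hf, hf', Prod.mk.injEq, h1] at h2
          have h3 : pick (ch (c (σ x))) (σ x) = some r := h2.2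
          rw [hcp x, hcx] at h3
          exact (pick_eq_some (hchdisj k)).mp h3
        refine ⟨⟨hcp, ?_⟩, ?_⟩
        · intro k r₁ r₂ hr x hx y hy
          exact chunk_lt hr (hmem k r₁ x hx) (hmem k r₂ y hy)
        · funext k
          apply Finset.eq_of_subset_of_card_le
          · intro y hy
            obtain ⟨x, hx, rfl⟩ := Finset.mem_image.mp hy
            obtain ⟨r, _, hr⟩ := Finset.mem_biUnion.mp hx
            exact chunk_subset (u k) (a k) r (hmem k r x hr)
          · rw [Finset.card_image_of_injective _ σ.injective, hUBcard k, (huk k).2]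
    rw [hset, card_perm_colors f f' hcounts]
    rw [Fintype.prod_prod_type]
    apply Finset.prod_congr rfl
    intro k _
    rw [Fintype.prod_option]
    congr 1
    · rw [hffib_none k, Finset.card_sdiff_of_subset (hUBsub k), hUBcard k]
    · apply Finset.prod_congr rfl
      intro r _
      rw [hffib_some k r]
  -- assemble
  have hcardU : U.card = ∏ k, ((fib k).card).choose (asum k) := by
    rw [hU, Fintype.card_piFinset]
    exact Finset.prod_congr rfl fun k _ => Finset.card_powersetCard _ _
  have hNval : Pset.card = (∏ k, ((fib k).card).choose (asum k))
      * ∏ k, (Nat.factorial ((fib k).card - asum k) * ∏ r, Nat.factorial (a k r)) := by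
    rw [hN, Finset.sum_congr rfl hfiber, Finset.sum_const, hcardU, smul_eq_mul]
  rw [hNval]
  rw [← Finset.prod_mul_distrib, ← Finset.prod_mul_distrib]
  apply Finset.prod_congr rfl
  intro k _
  have hmul : (∏ r, Nat.factorial (a k r))
      * Nat.multinomial Finset.univ (fun r => (B k r).card) = Nat.factorial (asum k) := by
    rw [hasum]
    exact Nat.multinomial_spec _ _
  calc ((fib k).card).choose (asum k)
        * (Nat.factorial ((fib k).card - asum k) * ∏ r, Nat.factorial (a k r))
        * Nat.multinomial Finset.univ (fun r => (B k r).card)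
      = ((fib k).card).choose (asum k) * Nat.factorial ((fib k).card - asum k)
          * ((∏ r, Nat.factorial (a k r))
            * Nat.multinomial Finset.univ (fun r => (B k r).card)) := by ring
    _ = ((fib k).card).choose (asum k) * Nat.factorial (asum k)
          * Nat.factorial ((fib k).card - asum k) := by rw [hmul]; ring
    _ = Nat.factorial (fib k).card :=
        Nat.choose_mul_factorial_mul_factorial (hasle k)

end


/-- **Lemma (double counting).** Let `[n]` be the disjoint union of `X_1, …, X_e`,
`d ≥ 2`, and `{(A_i^{(1)}, …, A_i^{(d)})}_{1 ≤ i ≤ m}` a family of `d`-partitions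
of `[n]`. Let `S` be the support, `S_k = S ∩ X_k`, `s_k = |S_k|`. Let `G(S)` be
the permutations of `S` keeping each `S_k` invariant, and for `σ ∈ G(S)` let
`I_σ` be the set of `i ∈ [m]` with
`σ(A_i^{(1)} ∩ X_k) < σ(A_i^{(2)} ∩ X_k) < ⋯ < σ(A_i^{(d)} ∩ X_k)` for all `k`.
Then `∑_i ∏_k (s_k! · multinomial(…)⁻¹) = ∑_{σ ∈ G(S)} |I_σ|`. -/
theorem double_counting_lemma (n d e m : ℕ) (hd : 2 ≤ d)
    (X : Fin e → Finset ℕ)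
    (hXdisj : ∀ k l : Fin e, k ≠ l → Disjoint (X k) (X l))
    (hXcover : Finset.univ.biUnion X = Finset.Icc 1 n)
    (A : Fin m → Fin d → Finset ℕ)
    (hAsub : ∀ i r, A i r ⊆ Finset.Icc 1 n)
    (hAdisj : ∀ i, ∀ p q : Fin d, p ≠ q → Disjoint (A i p) (A i q))
    (S : Finset ℕ)
    (hS : S = Finset.univ.biUnion fun i : Fin m =>
      Finset.univ.biUnion fun r : Fin d => A i r) :
    ∑ i : Fin m, ∏ k : Fin e,
        ((((S ∩ X k).card).factorial : ℚ) *
          ((Nat.multinomial Finset.univ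
            fun r : Fin d => ((A i r) ∩ X k).card : ℕ) : ℚ)⁻¹)
      =
    ∑ σ ∈ Finset.univ.filter (fun σ : Equiv.Perm {x : ℕ // x ∈ S} =>
        ∀ k : Fin e, ∀ a : {x : ℕ // x ∈ S}, (a : ℕ) ∈ X k → ((σ a : ℕ) ∈ X k)),
      ((Finset.univ.filter (fun i : Fin m =>
          ∀ k : Fin e, ∀ r₁ r₂ : Fin d, r₁ < r₂ →
            ∀ a b : {x : ℕ // x ∈ S},
              (a : ℕ) ∈ (A i r₁) ∩ X k → (b : ℕ) ∈ (A i r₂) ∩ X k →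
                (σ a : ℕ) < (σ b : ℕ))).card : ℚ) := by
  classical
  have hSsub : S ⊆ Finset.Icc 1 n := by
    intro x hx
    rw [hS] at hx
    simp only [Finset.mem_biUnion] at hx
    obtain ⟨i, -, r, -, hr⟩ := hx
    exact hAsub i r hr
  have hAS : ∀ i r, A i r ⊆ S := by
    intro i r x hx
    rw [hS]
    simp only [Finset.mem_biUnion]
    exact ⟨i, Finset.mem_univ i, r, Finset.mem_univ r, hx⟩
  have hmem : ∀ x : {x : ℕ // x ∈ S}, ∃ k, (x : ℕ) ∈ X k := by
    intro x
    have hx : (x : ℕ) ∈ Finset.univ.biUnion X := by rw [hXcover]; exact hSsub x.2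
    obtain ⟨k, -, hk⟩ := Finset.mem_biUnion.mp hx
    exact ⟨k, hk⟩
  set c : {x : ℕ // x ∈ S} → Fin e := fun x => (hmem x).choose with hcdef
  have hcspec : ∀ x, (x : ℕ) ∈ X (c x) := fun x => (hmem x).choose_spec
  have hciff : ∀ x k, c x = k ↔ (x : ℕ) ∈ X k := by
    intro x k
    constructor
    · rintro rfl; exact hcspec x
    · intro hk
      by_contra hne
      exact Finset.disjoint_left.mp (hXdisj (c x) k hne) (hcspec x) hk
  set B : Fin m → Fin e → Fin d → Finset {x : ℕ // x ∈ S} :=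
    fun i k r => Finset.univ.filter fun x => (x : ℕ) ∈ A i r ∩ X k with hBdef
  have hBc : ∀ i k r, ∀ x ∈ B i k r, c x = k := by
    intro i k r x hx
    have := (Finset.mem_filter.mp hx).2
    exact (hciff x k).mpr (Finset.mem_inter.mp this).2
  have hBdisj : ∀ i k, ∀ p q : Fin d, p ≠ q → Disjoint (B i k p) (B i k q) := by
    intro i k p q hpq
    rw [Finset.disjoint_left]
    intro x hx hx'
    have h1 := (Finset.mem_inter.mp (Finset.mem_filter.mp hx).2).1
    have h2 := (Finset.mem_inter.mp (Finset.mem_filter.mp hx').2).1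
    exact Finset.disjoint_left.mp (hAdisj i p q hpq) h1 h2
  have hBcard : ∀ i k r, (B i k r).card = ((A i r) ∩ X k).card := by
    intro i k r
    exact card_filter_coe _ (Finset.inter_subset_left.trans (hAS i r))
  have hfibcard : ∀ k, (Finset.univ.filter fun x : {x : ℕ // x ∈ S} => c x = k).card
      = (S ∩ X k).card := by
    intro k
    have heq : (Finset.univ.filter fun x : {x : ℕ // x ∈ S} => c x = k)
        = Finset.univ.filter fun x : {x : ℕ // x ∈ S} => (x : ℕ) ∈ S ∩ X k := by
      apply Finset.filter_congr
      intro x _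
      rw [hciff]
      simp [x.2]
    rw [heq, card_filter_coe _ Finset.inter_subset_left]
  have main : ∀ i : Fin m,
      (∏ k : Fin e,
        ((((S ∩ X k).card).factorial : ℚ) *
          ((Nat.multinomial Finset.univ
            fun r : Fin d => ((A i r) ∩ X k).card : ℕ) : ℚ)⁻¹))
      = ((Finset.univ.filter (fun σ : Equiv.Perm {x : ℕ // x ∈ S} =>
          (∀ k : Fin e, ∀ a : {x : ℕ // x ∈ S}, (a : ℕ) ∈ X k → ((σ a : ℕ) ∈ X k)) ∧
          (∀ k : Fin e, ∀ r₁ r₂ : Fin d, r₁ < r₂ →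
            ∀ a b : {x : ℕ // x ∈ S},
              (a : ℕ) ∈ (A i r₁) ∩ X k → (b : ℕ) ∈ (A i r₂) ∩ X k →
                (σ a : ℕ) < (σ b : ℕ)))).card : ℚ) := by
    intro i
    have hfeq : (Finset.univ.filter (fun σ : Equiv.Perm {x : ℕ // x ∈ S} =>
          (∀ k : Fin e, ∀ a : {x : ℕ // x ∈ S}, (a : ℕ) ∈ X k → ((σ a : ℕ) ∈ X k)) ∧
          (∀ k : Fin e, ∀ r₁ r₂ : Fin d, r₁ < r₂ →
            ∀ a b : {x : ℕ // x ∈ S},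
              (a : ℕ) ∈ (A i r₁) ∩ X k → (b : ℕ) ∈ (A i r₂) ∩ X k →
                (σ a : ℕ) < (σ b : ℕ))))
        = (Finset.univ.filter (fun σ : Equiv.Perm {x : ℕ // x ∈ S} =>
          (∀ x, c (σ x) = c x) ∧
          ∀ (k : Fin e) (r₁ r₂ : Fin d), r₁ < r₂ →
            ∀ x ∈ B i k r₁, ∀ y ∈ B i k r₂, σ x < σ y)) := by
      apply Finset.filter_congr
      intro σ _
      constructor
      · rintro ⟨hG, hC⟩
        constructor
        · intro x
          exact (hciff (σ x) (c x)).mpr (hG (c x) x (hcspec x))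
        · intro k r₁ r₂ hr x hx y hy
          have hx' := (Finset.mem_filter.mp hx).2
          have hy' := (Finset.mem_filter.mp hy).2
          exact Subtype.coe_lt_coe.mp (hC k r₁ r₂ hr x y hx' hy')
      · rintro ⟨hG, hC⟩
        constructor
        · intro k a ha
          have h1 : c a = k := (hciff a k).mpr ha
          have h2 : c (σ a) = k := (hG a).trans h1
          exact (hciff (σ a) k).mp h2
        · intro k r₁ r₂ hr a b ha hb
          have ha' : a ∈ B i k r₁ := Finset.mem_filter.mpr ⟨Finset.mem_univ _, ha⟩
          have hb' : b ∈ B i k r₂ := Finset.mem_filter.mpr ⟨Finset.mem_univ _, hb⟩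
          exact Subtype.coe_lt_coe.mpr (hC k r₁ r₂ hr a ha' b hb')
    rw [hfeq]
    have hkey := grand_count c (B i) (hBc i) (hBdisj i)
    simp only [hBcard i, hfibcard] at hkey
    have hcast := congrArg (fun t : ℕ => (t : ℚ)) hkey
    push_cast at hcast
    have hne : (∏ k : Fin e, ((Nat.multinomial Finset.univ
        fun r : Fin d => ((A i r) ∩ X k).card : ℕ) : ℚ)) ≠ 0 := by
      apply Finset.prod_ne_zero_iff.mpr
      intro k _
      exact_mod_cast (Nat.multinomial_pos _ _).ne'
    rw [Finset.prod_mul_distrib, Finset.prod_inv_distrib, ← hcast,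
      mul_inv_cancel_right₀ hne]
    congr
  rw [Finset.sum_congr rfl fun i _ => main i]
  have hstep : ∀ i : Fin m,
      ((Finset.univ.filter (fun σ : Equiv.Perm {x : ℕ // x ∈ S} =>
          (∀ k : Fin e, ∀ a : {x : ℕ // x ∈ S}, (a : ℕ) ∈ X k → ((σ a : ℕ) ∈ X k)) ∧
          (∀ k : Fin e, ∀ r₁ r₂ : Fin d, r₁ < r₂ →
            ∀ a b : {x : ℕ // x ∈ S},
              (a : ℕ) ∈ (A i r₁) ∩ X k → (b : ℕ) ∈ (A i r₂) ∩ X k →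
                (σ a : ℕ) < (σ b : ℕ)))).card : ℚ)
      = ∑ σ ∈ Finset.univ.filter (fun σ : Equiv.Perm {x : ℕ // x ∈ S} =>
          ∀ k : Fin e, ∀ a : {x : ℕ // x ∈ S}, (a : ℕ) ∈ X k → ((σ a : ℕ) ∈ X k)),
        (if (∀ k : Fin e, ∀ r₁ r₂ : Fin d, r₁ < r₂ →
            ∀ a b : {x : ℕ // x ∈ S},
              (a : ℕ) ∈ (A i r₁) ∩ X k → (b : ℕ) ∈ (A i r₂) ∩ X k →
                (σ a : ℕ) < (σ b : ℕ)) then (1 : ℚ) else 0) := by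
    intro i
    rw [Finset.sum_boole, Finset.filter_filter]
  rw [Finset.sum_congr rfl fun i _ => hstep i, Finset.sum_comm]
  apply Finset.sum_congr rfl
  intro σ _
  rw [Finset.sum_boole]
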